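/- Let S₁,…,S_N : ℝ^d → ℝ^d be contracting similarities generating a self-similar set K satisfying the strong open set condition with feasible open set O (so ∪ᵢ SᵢO ⊆ O, the SᵢO are pairwise disjoint, and K ∩ O ≠ ∅). If there exist a point x ∈ K, ε > 0 and a closed cube C ⊂ B(x,ε) such that the interior of C meets K and C ∩ K is similar to [0,1]^k × P for some P ⊂ ℝ^{d−k}, then for every y ∈ K and every δ > 0 there exist a closed cube C′ ⊂ B(y,δ) with interior meeting K such that C′ ∩ K is similar to [0,1]^k × P′ for some P′ ⊂ ℝ^{d−k}. -/

import Mathlib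

open Metric Set

/-- A similarity between metric spaces: a map scaling all distances by a fixed
positive ratio. -/
def IsSimilarity {α β : Type*} [MetricSpace α] [MetricSpace β] (f : α → β) : Prop :=
  ∃ r : ℝ, 0 < r ∧ ∀ x y, dist (f x) (f y) = r * dist x y

/-- Two sets (in possibly different metric spaces) are similar if a similarity maps
one onto the other. -/
def SimilarSets {α β : Type*} [MetricSpace α] [MetricSpace β]
    (A : Set α) (B : Set β) : Prop :=
  ∃ f : α → β, IsSimilarity f ∧ f '' A = B

/-- The unit cube `[0,1]^d` in `ℝ^d`. -/
def unitCube (d : ℕ) : Set (EuclideanSpace ℝ (Fin d)) :=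
  {x | ∀ i, x i ∈ Set.Icc (0 : ℝ) 1}

/-- A closed cube in `ℝ^d`: a similar copy of the unit cube. -/
def IsClosedCube {d : ℕ} (C : Set (EuclideanSpace ℝ (Fin d))) : Prop :=
  SimilarSets (unitCube d) C

/-- The product set `[0,1]^k × P ⊆ ℝ^k × ℝ^m`, with the Euclidean (L²) product
metric. -/
def cubeProd (k m : ℕ) (P : Set (EuclideanSpace ℝ (Fin m))) :
    Set (WithLp 2 (EuclideanSpace ℝ (Fin k) × EuclideanSpace ℝ (Fin m))) :=
  (WithLp.equiv 2 (EuclideanSpace ℝ (Fin k) × EuclideanSpace ℝ (Fin m))).symm ''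
    (unitCube k ×ˢ P)

/-- `A` is a `k`-flat set in `ℝ^d`: it is similar to `[0,1]^k × P` for some
`P ⊆ ℝ^{d−k}`. -/
def IsKFlatSet (d k : ℕ) (A : Set (EuclideanSpace ℝ (Fin d))) : Prop :=
  ∃ P : Set (EuclideanSpace ℝ (Fin (d - k))), SimilarSets A (cubeProd k (d - k) P)

section Aux
open Module

section Rigidity

variable {E F : Type*} [NormedAddCommGroup E] [InnerProductSpace ℝ E]
  [NormedAddCommGroup F] [InnerProductSpace ℝ F]
  [FiniteDimensional ℝ E] [FiniteDimensional ℝ F]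

/-- A distance-preserving map fixing 0 between equal-dimensional real inner product
spaces agrees with a linear isometry equivalence. -/
lemma exists_lie_of_isometry (hpos : 0 < finrank ℝ E) (hrank : finrank ℝ E = finrank ℝ F)
    {g : E → F} (hg : ∀ x y, dist (g x) (g y) = dist x y) (hg0 : g 0 = 0) :
    ∃ L : E ≃ₗᵢ[ℝ] F, ∀ x, L x = g x := by
  have hnorm : ∀ x, ‖g x‖ = ‖x‖ := by
    intro x
    have := hg x 0
    rwa [hg0, dist_zero_right, dist_zero_right] at this
  have hnsub : ∀ x y, ‖g x - g y‖ = ‖x - y‖ := by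
    intro x y
    have := hg x y
    rwa [dist_eq_norm, dist_eq_norm] at this
  have hinner : ∀ x y, (inner ℝ (g x) (g y) : ℝ) = inner ℝ x y := by
    intro x y
    have h1 : ‖g x - g y‖ ^ 2 = ‖g x‖ ^ 2 - 2 * inner ℝ (g x) (g y) + ‖g y‖ ^ 2 :=
      norm_sub_sq_real _ _
    have h2 : ‖x - y‖ ^ 2 = ‖x‖ ^ 2 - 2 * inner ℝ x y + ‖y‖ ^ 2 := norm_sub_sq_real _ _
    rw [hnsub, hnorm, hnorm, h2] at h1
    linarith
  set n := finrank ℝ E with hn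
  haveI : Nonempty (Fin n) := ⟨⟨0, hpos⟩⟩
  let b : OrthonormalBasis (Fin n) ℝ E := stdOrthonormalBasis ℝ E
  have hortho : Orthonormal ℝ (fun i : Fin n => g (b i)) := by
    rw [orthonormal_iff_ite]
    intro i j
    rw [hinner]
    have := b.orthonormal
    rw [orthonormal_iff_ite] at this
    exact this i j
  have hcard : Fintype.card (Fin n) = finrank ℝ F := by rw [Fintype.card_fin]; exact hrank
  let bas : Basis (Fin n) ℝ F :=
    basisOfLinearIndependentOfCardEqFinrank hortho.linearIndependent hcard
  have hbas : ∀ i, bas i = g (b i) := by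
    intro i; simp [bas, coe_basisOfLinearIndependentOfCardEqFinrank]
  have hspan : ⊤ ≤ Submodule.span ℝ (Set.range fun i : Fin n => g (b i)) := by
    rw [show (Set.range fun i : Fin n => g (b i)) = Set.range bas by
      ext v; constructor <;> rintro ⟨i, rfl⟩ <;> exact ⟨i, by rw [hbas]⟩]
    rw [bas.span_eq]
  let B : OrthonormalBasis (Fin n) ℝ F := OrthonormalBasis.mk hortho hspan
  have hB : ∀ i, B i = g (b i) := fun i => by simp [B]
  let L : E ≃ₗᵢ[ℝ] F := b.repr.trans B.repr.symm
  refine ⟨L, fun x => ?_⟩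
  apply B.repr.injective
  ext i
  have h1 : B.repr (L x) i = b.repr x i := by
    simp [L]
  rw [h1, B.repr_apply_apply, b.repr_apply_apply, hB, hinner]

end Rigidity

section Pack
variable {E F : Type*} [NormedAddCommGroup E] [InnerProductSpace ℝ E]
  [NormedAddCommGroup F] [InnerProductSpace ℝ F]
  [FiniteDimensional ℝ E] [FiniteDimensional ℝ F]

/-- A similarity between equal-dimensional real inner product spaces is a
homeomorphism, with similar inverse. -/
lemma IsSimilarity.exists_homeomorph (hpos : 0 < finrank ℝ E)
    (hrank : finrank ℝ E = finrank ℝ F) {f : E → F} (hf : IsSimilarity f) :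
    ∃ h : E ≃ₜ F, (∀ x, h x = f x) ∧ IsSimilarity ⇑h.symm := by
  obtain ⟨r, hr, hd⟩ := hf
  set g : E → F := fun x => r⁻¹ • (f x - f 0) with hgdef
  have hgd : ∀ x y, dist (g x) (g y) = dist x y := by
    intro x y
    rw [hgdef]
    simp only [dist_smul₀, dist_sub_right, norm_inv, Real.norm_eq_abs, abs_of_pos hr, hd]
    field_simp
  have hg0 : g 0 = 0 := by simp [hgdef]
  obtain ⟨L, hL⟩ := exists_lie_of_isometry hpos hrank hgd hg0
  have hfx : ∀ x, f x = r • L x + f 0 := by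
    intro x
    rw [hL]
    simp only [hgdef]
    rw [smul_smul, mul_inv_cancel₀ hr.ne', one_smul, sub_add_cancel]
  set finv : F → E := fun y => L.symm (r⁻¹ • (y - f 0)) with hfinv
  have hleft : ∀ x, finv (f x) = x := by
    intro x
    rw [hfinv, hfx x]
    simp only [add_sub_cancel_right, smul_smul, inv_mul_cancel₀ hr.ne', one_smul]
    exact L.symm_apply_apply x
  have hright : ∀ y, f (finv y) = y := by
    intro y
    rw [hfinv, hfx (L.symm (r⁻¹ • (y - f 0)))]
    simp only [LinearIsometryEquiv.apply_symm_apply, smul_smul, mul_inv_cancel₀ hr.ne',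
      one_smul, sub_add_cancel]
  have hcf : Continuous f := by
    have : f = fun x => r • L x + f 0 := funext hfx
    rw [this]
    exact (L.continuous.const_smul r).add continuous_const
  have hcfinv : Continuous finv := by
    rw [hfinv]
    exact L.symm.continuous.comp ((continuous_id.sub continuous_const).const_smul r⁻¹)
  refine ⟨⟨⟨f, finv, hleft, hright⟩, hcf, hcfinv⟩, fun x => rfl, ?_⟩
  refine ⟨r⁻¹, inv_pos.mpr hr, fun a b => ?_⟩
  show dist (finv a) (finv b) = r⁻¹ * dist a b
  have := hd (finv a) (finv b)
  rw [hright, hright] at this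
  rw [this]
  field_simp
end Pack

section Basics
variable {α β γ : Type*} [MetricSpace α] [MetricSpace β] [MetricSpace γ]

lemma IsSimilarity.comp {g : β → γ} {f : α → β} (hg : IsSimilarity g)
    (hf : IsSimilarity f) : IsSimilarity (g ∘ f) := by
  obtain ⟨r, hr, hrd⟩ := hg
  obtain ⟨t, ht, htd⟩ := hf
  exact ⟨r * t, mul_pos hr ht, fun x y => by simp [Function.comp, hrd, htd, mul_assoc]⟩

lemma IsSimilarity.injective {f : α → β} (hf : IsSimilarity f) :
    Function.Injective f := by
  obtain ⟨r, hr, hrd⟩ := hf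
  intro a b hab
  have : dist (f a) (f b) = 0 := by rw [hab]; simp
  rw [hrd] at this
  have := (mul_eq_zero.mp this).resolve_left hr.ne'
  exact dist_eq_zero.mp this

lemma IsSimilarity.continuous {f : α → β} (hf : IsSimilarity f) : Continuous f := by
  obtain ⟨r, hr, hrd⟩ := hf
  refine (LipschitzWith.of_dist_le_mul (K := r.toNNReal) fun x y => ?_).continuous
  rw [hrd, Real.coe_toNNReal r hr.le]

end Basics

lemma finrank_prodL2 (k m : ℕ) :
    Module.finrank ℝ (WithLp 2 (EuclideanSpace ℝ (Fin k) × EuclideanSpace ℝ (Fin m))) = k + m := by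
  rw [(WithLp.linearEquiv 2 ℝ (EuclideanSpace ℝ (Fin k) × EuclideanSpace ℝ (Fin m))).finrank_eq]
  rw [Module.finrank_prod, finrank_euclideanSpace_fin, finrank_euclideanSpace_fin]


lemma sum_split {d k : ℕ} (hkd : k ≤ d) (g : Fin d → ℝ) :
    ∑ i, g i = (∑ i : Fin k, g (Fin.castLE hkd i))
      + ∑ j : Fin (d - k), g ⟨k + (j : ℕ), by omega⟩ := by
  have hm : k + (d - k) = d := by omega
  let e : Fin k ⊕ Fin (d - k) ≃ Fin d := finSumFinEquiv.trans (finCongr hm)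
  rw [← Fintype.sum_equiv e (fun x => g (e x)) g (fun x => rfl)]
  rw [Fintype.sum_sum_type]
  have h1 : ∀ i : Fin k, e (Sum.inl i) = Fin.castLE hkd i := fun i =>
    Fin.ext (by simp [e, finSumFinEquiv])
  have h2 : ∀ j : Fin (d - k), e (Sum.inr j) = (⟨k + (j : ℕ), by omega⟩ : Fin d) := fun j =>
    Fin.ext (by simp [e, finSumFinEquiv])
  simp only [h1, h2]

lemma euc_dist_le {n : ℕ} {u v : EuclideanSpace ℝ (Fin n)} {s : ℝ} (hs : 0 ≤ s)
    (h : ∀ i, |u i - v i| ≤ s) : dist u v ≤ s * Real.sqrt n := by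
  rw [EuclideanSpace.dist_eq]
  have hsum : (∑ i, dist (u i) (v i) ^ 2) ≤ (n : ℝ) * s ^ 2 := by
    calc (∑ i, dist (u i) (v i) ^ 2) ≤ ∑ _i : Fin n, s ^ 2 := by
          apply Finset.sum_le_sum
          intro i _
          have : dist (u i) (v i) ≤ s := by rw [Real.dist_eq]; exact h i
          exact pow_le_pow_left₀ dist_nonneg this 2
      _ = (n : ℝ) * s ^ 2 := by simp [mul_comm]
  calc Real.sqrt (∑ i, dist (u i) (v i) ^ 2) ≤ Real.sqrt ((n : ℝ) * s ^ 2) :=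
        Real.sqrt_le_sqrt hsum
    _ = s * Real.sqrt n := by
        rw [mul_comm ((n : ℝ)) (s ^ 2), Real.sqrt_mul (sq_nonneg s), Real.sqrt_sq hs]

section Split
variable {d k : ℕ}

/-- The canonical split of `ℝ^d` into `ℝ^k ×₂ ℝ^{d-k}`. -/
noncomputable def splitMap (hkd : k ≤ d) (x : EuclideanSpace ℝ (Fin d)) :
    WithLp 2 (EuclideanSpace ℝ (Fin k) × EuclideanSpace ℝ (Fin (d - k))) :=
  (WithLp.equiv 2 (EuclideanSpace ℝ (Fin k) × EuclideanSpace ℝ (Fin (d - k)))).symm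
    (⟨WithLp.toLp 2 (fun i => x (Fin.castLE hkd i)), WithLp.toLp 2 (fun j : Fin (d - k) => x ⟨k + (j : ℕ), by omega⟩)⟩)

lemma splitMap_fst (hkd : k ≤ d) (x : EuclideanSpace ℝ (Fin d)) :
    (splitMap hkd x).fst = fun i => x (Fin.castLE hkd i) := rfl

lemma splitMap_snd (hkd : k ≤ d) (x : EuclideanSpace ℝ (Fin d)) :
    (splitMap hkd x).snd = fun j : Fin (d - k) => x ⟨k + (j : ℕ), by omega⟩ := rfl

lemma splitMap_dist (hkd : k ≤ d) (x y : EuclideanSpace ℝ (Fin d)) :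
    dist (splitMap hkd x) (splitMap hkd y) = dist x y := by
  rw [WithLp.prod_dist_eq_of_L2]
  have h1 : dist (splitMap hkd x).fst (splitMap hkd y).fst ^ 2
      = ∑ i : Fin k, dist (x (Fin.castLE hkd i)) (y (Fin.castLE hkd i)) ^ 2 := by
    rw [EuclideanSpace.dist_eq, Real.sq_sqrt (by positivity)]
    rfl
  have h2 : dist (splitMap hkd x).snd (splitMap hkd y).snd ^ 2
      = ∑ j : Fin (d - k), dist (x ⟨k + (j : ℕ), by omega⟩) (y ⟨k + (j : ℕ), by omega⟩) ^ 2 := by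
    rw [EuclideanSpace.dist_eq, Real.sq_sqrt (by positivity)]
    rfl
  rw [h1, h2, EuclideanSpace.dist_eq]
  congr 1
  exact (sum_split hkd (fun i => dist (x i) (y i) ^ 2)).symm

end Split

lemma mem_cubeProd {k m : ℕ} {P : Set (EuclideanSpace ℝ (Fin m))}
    {q : WithLp 2 (EuclideanSpace ℝ (Fin k) × EuclideanSpace ℝ (Fin m))} :
    q ∈ cubeProd k m P ↔ (∀ i, q.fst i ∈ Set.Icc (0 : ℝ) 1) ∧ q.snd ∈ P := by
  rw [cubeProd, Equiv.image_eq_preimage_symm]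
  simp only [Equiv.symm_symm, Set.mem_preimage, Set.mem_prod]
  exact Iff.rfl

lemma abs_sub_le_of_Icc {u v α s : ℝ} (hu : u ∈ Set.Icc α (α + s))
    (hv : v ∈ Set.Icc α (α + s)) : |u - v| ≤ s := by
  rw [abs_sub_le_iff]
  constructor <;> [skip; skip] <;>
  · obtain ⟨h1, h2⟩ := hu; obtain ⟨h3, h4⟩ := hv; linarith

lemma sqrt_sq_add_sq_le {a b : ℝ} (ha : 0 ≤ a) (hb : 0 ≤ b) :
    Real.sqrt (a ^ 2 + b ^ 2) ≤ a + b := by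
  calc Real.sqrt (a ^ 2 + b ^ 2) ≤ Real.sqrt ((a + b) ^ 2) :=
        Real.sqrt_le_sqrt (by nlinarith)
    _ = a + b := Real.sqrt_sq (by linarith)

set_option maxHeartbeats 1000000 in
lemma stepA {d k : ℕ} (hkd : k ≤ d) (hd : 0 < d)
    {C K : Set (EuclideanSpace ℝ (Fin d))} {P : Set (EuclideanSpace ℝ (Fin (d - k)))}
    {f : EuclideanSpace ℝ (Fin d) →
      WithLp 2 (EuclideanSpace ℝ (Fin k) × EuclideanSpace ℝ (Fin (d - k)))}
    (hfsim : IsSimilarity f) (himg : f '' (C ∩ K) = cubeProd k (d - k) P)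
    {ζ : EuclideanSpace ℝ (Fin d)} (hζ : ζ ∈ C ∩ K) {t : ℝ} (ht : 0 < t) :
    ∃ D : Set (EuclideanSpace ℝ (Fin d)), IsClosedCube D ∧ D ⊆ Metric.closedBall ζ t ∧
      (∃ ξ, ξ ∈ interior D ∧ ξ ∈ C ∩ K) ∧
      (Metric.closedBall ζ t ⊆ C → IsKFlatSet d k (D ∩ K)) := by
  classical
  obtain ⟨rf, hrf, hfd⟩ := hfsim
  have hfsim' : IsSimilarity f := ⟨rf, hrf, hfd⟩
  have hrank : Module.finrank ℝ (EuclideanSpace ℝ (Fin d)) = Module.finrank ℝ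
      (WithLp 2 (EuclideanSpace ℝ (Fin k) × EuclideanSpace ℝ (Fin (d - k)))) := by
    rw [finrank_euclideanSpace_fin, finrank_prodL2]; omega
  have hpos : 0 < Module.finrank ℝ (EuclideanSpace ℝ (Fin d)) := by
    rw [finrank_euclideanSpace_fin]; exact hd
  obtain ⟨h, hh, hhsym⟩ := IsSimilarity.exists_homeomorph hpos hrank hfsim'
  set p := f ζ with hpdef
  have hpcp : p ∈ cubeProd k (d - k) P := by
    rw [← himg]; exact ⟨ζ, hζ, rfl⟩
  obtain ⟨hp1, hp2⟩ := mem_cubeProd.mp hpcp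
  set κ : ℝ := Real.sqrt k + Real.sqrt ((d - k : ℕ) : ℝ) + 1 with hκdef
  have hκ : 0 < κ := by positivity
  set s : ℝ := min 1 (t * rf / κ) with hsdef
  have hs0 : 0 < s := lt_min one_pos (by positivity)
  have hs1 : s ≤ 1 := min_le_left _ _
  have hsκ : s * κ ≤ t * rf := by
    have : s ≤ t * rf / κ := min_le_right _ _
    calc s * κ ≤ (t * rf / κ) * κ := by nlinarith
      _ = t * rf := by field_simp
  set a : Fin k → ℝ := fun i => min (p.fst i) (1 - s) with hadef
  have ha0 : ∀ i, 0 ≤ a i := fun i => le_min (hp1 i).1 (by linarith)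
  have ha1 : ∀ i, a i + s ≤ 1 := fun i => by
    have := min_le_right (p.fst i) (1 - s); simp only [hadef]; linarith
  have hpa : ∀ i, p.fst i ∈ Set.Icc (a i) (a i + s) := by
    intro i
    refine ⟨min_le_left _ _, ?_⟩
    rcases le_total (p.fst i) (1 - s) with hle | hle
    · simp only [hadef, min_eq_left hle]; linarith
    · simp only [hadef, min_eq_right hle]; have := (hp1 i).2; linarith
  set c : Fin (d - k) → ℝ := fun j => p.snd j - s / 2 with hcdef
  have hpc : ∀ j, p.snd j ∈ Set.Icc (c j) (c j + s) := by
    intro j; constructor <;> simp only [hcdef] <;> linarith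
  set Q : Set (WithLp 2 (EuclideanSpace ℝ (Fin k) × EuclideanSpace ℝ (Fin (d - k)))) :=
    {q | (∀ i, q.fst i ∈ Set.Icc (a i) (a i + s)) ∧
         (∀ j, q.snd j ∈ Set.Icc (c j) (c j + s))} with hQdef
  set bb : WithLp 2 (EuclideanSpace ℝ (Fin k) × EuclideanSpace ℝ (Fin (d - k))) :=
    (WithLp.equiv 2 _).symm (⟨WithLp.toLp 2 a, WithLp.toLp 2 c⟩) with hbbdef
  set ψ : EuclideanSpace ℝ (Fin d) →
      WithLp 2 (EuclideanSpace ℝ (Fin k) × EuclideanSpace ℝ (Fin (d - k))) :=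
    fun x => bb + s • splitMap hkd x with hψdef
  have hψsim : IsSimilarity ψ := by
    refine ⟨s, hs0, fun x y => ?_⟩
    rw [hψdef]
    simp only [dist_add_left, dist_smul₀, Real.norm_eq_abs, abs_of_pos hs0, splitMap_dist]
  have hψfst : ∀ x i, (ψ x).fst i = a i + s * x (Fin.castLE hkd i) := fun x i => rfl
  have hψsnd : ∀ x (j : Fin (d - k)), (ψ x).snd j = c j + s * x ⟨k + (j : ℕ), by omega⟩ :=
    fun x j => rfl
  have hψQ : ψ '' unitCube d = Q := by
    ext q
    constructor
    · rintro ⟨x, hxu, rfl⟩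
      constructor
      · intro i
        rw [hψfst]
        have := hxu (Fin.castLE hkd i)
        constructor <;> nlinarith [this.1, this.2]
      · intro j
        rw [hψsnd]
        have := hxu ⟨k + (j : ℕ), by omega⟩
        constructor <;> nlinarith [this.1, this.2]
    · rintro ⟨hq1, hq2⟩
      refine ⟨WithLp.toLp 2 fun l => if hl : (l : ℕ) < k then (q.fst ⟨l, hl⟩ - a ⟨l, hl⟩) / s
        else (q.snd ⟨(l : ℕ) - k, by omega⟩ - c ⟨(l : ℕ) - k, by omega⟩) / s, ?_, ?_⟩
      · intro l
        by_cases hl : (l : ℕ) < k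
        · simp only [dif_pos hl]
          have := hq1 ⟨l, hl⟩
          constructor
          · apply div_nonneg _ hs0.le; linarith [this.1]
          · rw [div_le_one hs0]; linarith [this.2]
        · simp only [dif_neg hl]
          have := hq2 ⟨(l : ℕ) - k, by omega⟩
          constructor
          · apply div_nonneg _ hs0.le; linarith [this.1]
          · rw [div_le_one hs0]; linarith [this.2]
      · apply (WithLp.equiv 2 _).injective
        apply Prod.ext
        · ext i
          show (ψ _).fst i = q.fst i
          rw [hψfst]
          dsimp only
          have hcast : ((Fin.castLE hkd i : Fin d) : ℕ) < k := i.isLt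
          rw [dif_pos hcast]
          have hfin : (⟨((Fin.castLE hkd i : Fin d) : ℕ), hcast⟩ : Fin k) = i := by
            apply Fin.ext; rfl
          rw [hfin]
          have hss : s * ((q.fst i - a i) / s) = q.fst i - a i := by
            rw [mul_comm, div_mul_cancel₀ _ hs0.ne']
          rw [hss]; ring
        · ext j
          show (ψ _).snd j = q.snd j
          rw [hψsnd]
          dsimp only
          have hcast : ¬ ((⟨k + (j : ℕ), by omega⟩ : Fin d) : ℕ) < k := by
            show ¬ k + (j : ℕ) < k; omega
          rw [dif_neg hcast]
          have hfin : (⟨((⟨k + (j : ℕ), by omega⟩ : Fin d) : ℕ) - k, by omega⟩ : Fin (d - k)) = j := by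
            apply Fin.ext; show k + (j : ℕ) - k = (j : ℕ); omega
          rw [hfin]
          have hss : s * ((q.snd j - c j) / s) = q.snd j - c j := by
            rw [mul_comm, div_mul_cancel₀ _ hs0.ne']
          rw [hss]; ring
  -- continue
  set D : Set (EuclideanSpace ℝ (Fin d)) := h ⁻¹' Q with hDdef
  have hfinj : Function.Injective f := IsSimilarity.injective ⟨rf, hrf, hfd⟩
  have hhf : ∀ x, h x = f x := hh
  have himgD : f '' D = Q := by
    have : f '' D = h '' D := by
      apply Set.image_congr; intro x _; rw [hhf]
    rw [this, hDdef, h.image_preimage]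
  -- cube
  have hcube : IsClosedCube D := by
    refine ⟨⇑h.symm ∘ ψ, hhsym.comp hψsim, ?_⟩
    rw [Set.image_comp, hψQ]
    ext x
    simp only [Set.mem_image, hDdef, Set.mem_preimage]
    constructor
    · rintro ⟨q, hq, rfl⟩
      rwa [h.apply_symm_apply]
    · intro hx
      exact ⟨h x, hx, h.symm_apply_apply x⟩
  -- D inside the closed ball
  have hDball : D ⊆ Metric.closedBall ζ t := by
    intro q' hq'
    have hfq' : f q' ∈ Q := by rw [← hhf]; exact hq'
    obtain ⟨hq1, hq2⟩ := hfq'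
    have hd1 : dist (f q').fst p.fst ≤ s * Real.sqrt k :=
      euc_dist_le hs0.le fun i => abs_sub_le_of_Icc (hq1 i) (hpa i)
    have hd2 : dist (f q').snd p.snd ≤ s * Real.sqrt ((d - k : ℕ) : ℝ) :=
      euc_dist_le hs0.le fun j => abs_sub_le_of_Icc (hq2 j) (hpc j)
    have hdist : dist (f q') p ≤ s * κ := by
      rw [WithLp.prod_dist_eq_of_L2]
      calc Real.sqrt (dist (f q').fst p.fst ^ 2 + dist (f q').snd p.snd ^ 2)
          ≤ dist (f q').fst p.fst + dist (f q').snd p.snd :=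
            sqrt_sq_add_sq_le dist_nonneg dist_nonneg
        _ ≤ s * Real.sqrt k + s * Real.sqrt ((d - k : ℕ) : ℝ) := add_le_add hd1 hd2
        _ ≤ s * κ := by rw [hκdef]; nlinarith [Real.sqrt_nonneg (k : ℝ), hs0.le]
    have : rf * dist q' ζ ≤ s * κ := by rw [← hfd]; exact hdist
    have hq'ζ : dist q' ζ ≤ t := by
      by_contra hcon
      push_neg at hcon
      nlinarith
    exact Metric.mem_closedBall.mpr hq'ζ
  -- interior point
  set ustar : EuclideanSpace ℝ (Fin k) := WithLp.toLp 2 (fun i => a i + s / 2) with hustar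
  set qstar : WithLp 2 (EuclideanSpace ℝ (Fin k) × EuclideanSpace ℝ (Fin (d - k))) :=
    (WithLp.equiv 2 _).symm (⟨ustar, p.snd⟩) with hqstar
  have hqcp : qstar ∈ cubeProd k (d - k) P := by
    rw [mem_cubeProd]
    refine ⟨fun i => ?_, hp2⟩
    show a i + s / 2 ∈ Set.Icc (0 : ℝ) 1
    have := ha0 i; have := ha1 i
    constructor <;> [linarith; linarith]
  obtain ⟨ξ, hξCK, hfξ⟩ : qstar ∈ f '' (C ∩ K) := by rw [himg]; exact hqcp
  have hUopen : IsOpen {q : WithLp 2 (EuclideanSpace ℝ (Fin k) × EuclideanSpace ℝ (Fin (d - k))) |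
      (∀ i, q.fst i ∈ Set.Ioo (a i) (a i + s)) ∧
      (∀ j, q.snd j ∈ Set.Ioo (c j) (c j + s))} := by
    have hcont1 : Continuous fun q : WithLp 2
        (EuclideanSpace ℝ (Fin k) × EuclideanSpace ℝ (Fin (d - k))) => q.fst :=
      (Continuous.fst (WithLp.prodContinuousLinearEquiv 2 ℝ _ _).continuous)
    have hcont2 : Continuous fun q : WithLp 2
        (EuclideanSpace ℝ (Fin k) × EuclideanSpace ℝ (Fin (d - k))) => q.snd :=
      (Continuous.snd (WithLp.prodContinuousLinearEquiv 2 ℝ _ _).continuous)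
    have : {q : WithLp 2 (EuclideanSpace ℝ (Fin k) × EuclideanSpace ℝ (Fin (d - k))) |
        (∀ i, q.fst i ∈ Set.Ioo (a i) (a i + s)) ∧
        (∀ j, q.snd j ∈ Set.Ioo (c j) (c j + s))} =
        (⋂ i, (fun q : WithLp 2 (EuclideanSpace ℝ (Fin k) × EuclideanSpace ℝ (Fin (d - k))) =>
          q.fst i) ⁻¹' (Set.Ioo (a i) (a i + s))) ∩
        (⋂ j, (fun q : WithLp 2 (EuclideanSpace ℝ (Fin k) × EuclideanSpace ℝ (Fin (d - k))) =>
          q.snd j) ⁻¹' (Set.Ioo (c j) (c j + s))) := by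
      ext q
      simp only [Set.mem_setOf_eq, Set.mem_inter_iff, Set.mem_iInter, Set.mem_preimage]
    rw [this]
    refine IsOpen.inter (isOpen_iInter_of_finite fun i => ?_)
      (isOpen_iInter_of_finite fun j => ?_)
    · exact IsOpen.preimage (((EuclideanSpace.proj i).continuous).comp hcont1) isOpen_Ioo
    · exact IsOpen.preimage (((EuclideanSpace.proj j).continuous).comp hcont2) isOpen_Ioo
  have hqint : qstar ∈ interior Q := by
    rw [mem_interior]
    refine ⟨_, ?_, hUopen, ?_⟩
    · rintro q ⟨hq1, hq2⟩
      exact ⟨fun i => Set.Ioo_subset_Icc_self (hq1 i), fun j => Set.Ioo_subset_Icc_self (hq2 j)⟩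
    · constructor
      · intro i
        show a i + s / 2 ∈ Set.Ioo (a i) (a i + s)
        constructor <;> [linarith; linarith]
      · intro j
        show p.snd j ∈ Set.Ioo (c j) (c j + s)
        rw [hcdef]
        constructor
        · show p.snd j - s / 2 < p.snd j; linarith
        · show p.snd j < p.snd j - s / 2 + s; linarith
  have hξint : ξ ∈ interior D := by
    rw [hDdef, ← h.preimage_interior]
    show h ξ ∈ interior Q
    rw [hhf, hfξ]
    exact hqint
  refine ⟨D, hcube, hDball, ⟨ξ, hξint, hξCK⟩, ?_⟩
  intro hsub
  have hDC : D ⊆ C := hDball.trans hsub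
  have hDK : D ∩ K = D ∩ (C ∩ K) := by
    ext q
    constructor
    · rintro ⟨h1, h2⟩; exact ⟨h1, hDC h1, h2⟩
    · rintro ⟨h1, _, h3⟩; exact ⟨h1, h3⟩
  have hfDK : f '' (D ∩ K) = Q ∩ cubeProd k (d - k) P := by
    rw [hDK, Set.image_inter hfinj, himgD, himg]
  set cE : EuclideanSpace ℝ (Fin (d - k)) := WithLp.toLp 2 c with hcEdef
  set φ : WithLp 2 (EuclideanSpace ℝ (Fin k) × EuclideanSpace ℝ (Fin (d - k))) →
      WithLp 2 (EuclideanSpace ℝ (Fin k) × EuclideanSpace ℝ (Fin (d - k))) :=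
    fun q => s⁻¹ • (q - bb) with hφdef
  have hφsim : IsSimilarity φ := by
    refine ⟨s⁻¹, inv_pos.mpr hs0, fun u v => ?_⟩
    rw [hφdef]
    simp only [dist_smul₀, dist_sub_right, norm_inv, Real.norm_eq_abs, abs_of_pos hs0]
  set P' : Set (EuclideanSpace ℝ (Fin (d - k))) :=
    (fun v : EuclideanSpace ℝ (Fin (d - k)) => s⁻¹ • (v - cE)) ''
      ({v : EuclideanSpace ℝ (Fin (d - k)) | ∀ j, v j ∈ Set.Icc (c j) (c j + s)} ∩ P)
    with hP'def
  have hφQ : φ '' (Q ∩ cubeProd k (d - k) P) = cubeProd k (d - k) P' := by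
    ext q
    constructor
    · rintro ⟨q₀, ⟨⟨hb1, hb2⟩, hcp⟩, rfl⟩
      rw [mem_cubeProd]
      constructor
      · intro i
        show s⁻¹ * (q₀.fst i - a i) ∈ Set.Icc (0 : ℝ) 1
        obtain ⟨hl, hr⟩ := hb1 i
        constructor
        · have : (0 : ℝ) ≤ q₀.fst i - a i := by linarith
          positivity
        · have h1 : s⁻¹ * (q₀.fst i - a i) ≤ s⁻¹ * s := by
            apply mul_le_mul_of_nonneg_left _ (inv_pos.mpr hs0).le
            linarith
          rwa [inv_mul_cancel₀ hs0.ne'] at h1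
      · exact ⟨q₀.snd, ⟨hb2, (mem_cubeProd.mp hcp).2⟩, rfl⟩
    · intro hq
      obtain ⟨hq1, hq2⟩ := mem_cubeProd.mp hq
      obtain ⟨v₀, ⟨hv₀b, hv₀P⟩, hv₀⟩ := hq2
      have hsnd : (bb + s • q).snd = v₀ := by
        show cE + s • q.snd = v₀
        rw [← hv₀, smul_smul, mul_inv_cancel₀ hs0.ne', one_smul]
        abel
      refine ⟨bb + s • q, ⟨⟨?_, ?_⟩, mem_cubeProd.mpr ⟨?_, ?_⟩⟩, ?_⟩
      · intro i
        show a i + s * q.fst i ∈ Set.Icc (a i) (a i + s)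
        obtain ⟨hl, hr⟩ := hq1 i
        constructor <;> nlinarith
      · intro j
        rw [hsnd]
        exact hv₀b j
      · intro i
        show a i + s * q.fst i ∈ Set.Icc (0 : ℝ) 1
        obtain ⟨hl, hr⟩ := hq1 i
        have := ha0 i; have := ha1 i
        constructor <;> nlinarith
      · rw [hsnd]; exact hv₀P
      · rw [hφdef]
        show s⁻¹ • (bb + s • q - bb) = q
        rw [add_sub_cancel_left, smul_smul, inv_mul_cancel₀ hs0.ne', one_smul]
  exact ⟨P', φ ∘ f, hφsim.comp ⟨rf, hrf, hfd⟩, by rw [Set.image_comp, hfDK, hφQ]⟩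

lemma homeo_image_ball {E F : Type*} [MetricSpace E] [MetricSpace F] (h : E ≃ₜ F)
    {r : ℝ} (hr : 0 < r) (hd : ∀ x y, dist (h x) (h y) = r * dist x y)
    (z : E) (ρ : ℝ) : ⇑h '' Metric.ball z ρ = Metric.ball (h z) (r * ρ) := by
  ext q
  constructor
  · rintro ⟨b, hb, rfl⟩
    rw [Metric.mem_ball] at hb ⊢
    rw [hd]
    exact mul_lt_mul_of_pos_left hb hr
  · intro hq
    refine ⟨h.symm q, ?_, h.apply_symm_apply q⟩
    rw [Metric.mem_ball] at hq ⊢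
    have h1 := hd (h.symm q) z
    rw [h.apply_symm_apply] at h1
    nlinarith

end Aux

set_option maxHeartbeats 2000000 in
/-- If a self-similar set `K` (attractor of contracting similarities satisfying the
strong open set condition) admits one point `x ∈ K`, one scale `ε > 0` and one cube
`C ⊆ B(x,ε)` with `C° ∩ K ≠ ∅` and `C ∩ K` similar to `[0,1]^k × P`, then around
every `y ∈ K` and at every scale `δ > 0` there is such a cube. -/
theorem stmt8 {d N k : ℕ} (hN : 2 ≤ N) (hk : 1 ≤ k) (hkd : k ≤ d)
    (S : Fin N → EuclideanSpace ℝ (Fin d) → EuclideanSpace ℝ (Fin d))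
    (hS : ∀ i, ∃ r : ℝ, 0 < r ∧ r < 1 ∧
      ∀ x y, dist (S i x) (S i y) = r * dist x y)
    (K O : Set (EuclideanSpace ℝ (Fin d)))
    (hK : IsCompact K) (hKne : K.Nonempty) (hattr : K = ⋃ i, S i '' K)
    (hOopen : IsOpen O) (hOne : O.Nonempty)
    (hOfeas : (⋃ i, S i '' O) ⊆ O)
    (hOdisj : Pairwise fun i j => Disjoint (S i '' O) (S j '' O))
    (hSOSC : (K ∩ O).Nonempty)
    (x : EuclideanSpace ℝ (Fin d)) (hx : x ∈ K) (ε : ℝ) (hε : 0 < ε)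
    (C : Set (EuclideanSpace ℝ (Fin d)))
    (hC : IsClosedCube C) (hCB : C ⊆ closedBall x ε)
    (hCint : (interior C ∩ K).Nonempty)
    (hflat : IsKFlatSet d k (C ∩ K)) :
    ∀ y ∈ K, ∀ δ > 0, ∃ C' : Set (EuclideanSpace ℝ (Fin d)),
      IsClosedCube C' ∧ C' ⊆ closedBall y δ ∧
      (interior C' ∩ K).Nonempty ∧ IsKFlatSet d k (C' ∩ K) := by
  classical
  intro y hy δ hδ
  obtain ⟨z, hzK, hzO⟩ := hSOSC
  obtain ⟨ρ, hρ0, hρO⟩ := Metric.isOpen_iff.mp hOopen z hzO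
  obtain ⟨w, hwint, hwK⟩ := hCint
  obtain ⟨P, F, hFsim, hFimg⟩ := hflat
  have hd0 : 0 < d := lt_of_lt_of_le hk hkd
  choose r hr0 hr1 hrd using hS
  haveI : Nonempty (Fin N) := ⟨⟨0, by omega⟩⟩
  set i0 : Fin N := ⟨0, by omega⟩ with hi0
  set cmax : ℝ := Finset.univ.sup' Finset.univ_nonempty r with hcmax
  have hc1 : cmax < 1 := (Finset.sup'_lt_iff _).mpr fun i _ => hr1 i
  have hc0 : 0 < cmax := lt_of_lt_of_le (hr0 i0) (Finset.le_sup' r (Finset.mem_univ i0))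
  -- word maps
  set Sw : List (Fin N) → EuclideanSpace ℝ (Fin d) → EuclideanSpace ℝ (Fin d) :=
    fun σ => σ.foldr (fun i g => S i ∘ g) id with hSwdef
  have hSwnil : Sw [] = id := rfl
  have hSwcons : ∀ i σ, Sw (i :: σ) = S i ∘ Sw σ := fun i σ => rfl
  have hword : ∀ σ : List (Fin N), ∃ rs : ℝ, 0 < rs ∧ rs ≤ cmax ^ σ.length ∧
      ∀ u v, dist (Sw σ u) (Sw σ v) = rs * dist u v := by
    intro σ
    induction σ with
    | nil => exact ⟨1, one_pos, by simp, fun u v => by rw [hSwnil]; simp⟩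
    | cons i σ ih =>
      obtain ⟨rs, h0, hle, hdist⟩ := ih
      refine ⟨r i * rs, mul_pos (hr0 i) h0, ?_, fun u v => ?_⟩
      · rw [List.length_cons, pow_succ]
        have hri : r i ≤ cmax := Finset.le_sup' r (Finset.mem_univ i)
        have hcp : (0 : ℝ) < cmax ^ σ.length := pow_pos hc0 _
        nlinarith
      · rw [hSwcons]
        show dist (S i (Sw σ u)) (S i (Sw σ v)) = r i * rs * dist u v
        rw [hrd i, hdist]; ring
  choose rw' hrw0 hrwle hrwd using hword
  have hSwsim : ∀ σ, IsSimilarity (Sw σ) := fun σ => ⟨rw' σ, hrw0 σ, hrwd σ⟩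
  have hposE : 0 < Module.finrank ℝ (EuclideanSpace ℝ (Fin d)) := by
    rw [finrank_euclideanSpace_fin]; exact hd0
  have hSwhomeo : ∀ σ, ∃ h : EuclideanSpace ℝ (Fin d) ≃ₜ EuclideanSpace ℝ (Fin d),
      (∀ u, h u = Sw σ u) ∧ IsSimilarity ⇑h.symm := fun σ =>
    IsSimilarity.exists_homeomorph hposE rfl (hSwsim σ)
  choose hom hhom hhomsym using hSwhomeo
  have hSK : ∀ i, S i '' K ⊆ K := fun i => by
    have h1 := Set.subset_iUnion (fun j => S j '' K) i
    rwa [← hattr] at h1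
  have hSO : ∀ i, S i '' O ⊆ O := fun i =>
    (Set.subset_iUnion (fun j => S j '' O) i).trans hOfeas
  have hSwK : ∀ σ, Sw σ '' K ⊆ K := by
    intro σ
    induction σ with
    | nil => rw [hSwnil, Set.image_id]
    | cons i σ ih =>
      rw [hSwcons, Set.image_comp]
      exact (Set.image_mono (f := S i) ih).trans (hSK i)
  have hSwO : ∀ σ, Sw σ '' O ⊆ O := by
    intro σ
    induction σ with
    | nil => rw [hSwnil, Set.image_id]
    | cons i σ ih =>
      rw [hSwcons, Set.image_comp]
      exact (Set.image_mono (f := S i) ih).trans (hSO i)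
  obtain ⟨R, hR⟩ := hK.isBounded.subset_closedBall z
  have hR0 : 0 ≤ R := by simpa using hR hzK
  have hKn : ∀ n : ℕ, ∀ p ∈ K, ∃ σ : List (Fin N), σ.length = n ∧ ∃ q ∈ K, Sw σ q = p := by
    intro n
    induction n with
    | zero => intro p hp; exact ⟨[], rfl, p, hp, rfl⟩
    | succ n ih =>
      intro p hp
      have hp' : p ∈ ⋃ i, S i '' K := hattr ▸ hp
      rw [Set.mem_iUnion] at hp'
      obtain ⟨i, p', hp'K, hpe⟩ := hp'
      obtain ⟨σ, hlen, q, hq, hqe⟩ := ih p' hp'K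
      refine ⟨i :: σ, by simp [hlen], q, hq, ?_⟩
      rw [hSwcons]
      show S i (Sw σ q) = p
      rw [hqe, hpe]
  have hdense : ∀ p ∈ K, ∀ η > (0 : ℝ), ∃ σ : List (Fin N),
      dist p (Sw σ z) < η ∧ rw' σ * ρ < η := by
    intro p hp η hη
    have htend := tendsto_pow_atTop_nhds_zero_of_lt_one hc0.le hc1
    have hpos' : (0 : ℝ) < η / (R + ρ + 1) := by positivity
    obtain ⟨n, hn⟩ := (htend.eventually_lt_const hpos').exists
    have hn' : cmax ^ n * (R + ρ + 1) < η :=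
      (lt_div_iff₀ (by positivity : (0:ℝ) < R + ρ + 1)).mp hn
    obtain ⟨σ, hlen, q, hqK, hqe⟩ := hKn n p hp
    have hrb : rw' σ ≤ cmax ^ n := hlen ▸ hrwle σ
    have hdq : dist q z ≤ R := by simpa using hR hqK
    have hcp : (0 : ℝ) < cmax ^ n := pow_pos hc0 n
    refine ⟨σ, ?_, ?_⟩
    · have he : dist p (Sw σ z) = rw' σ * dist q z := by rw [← hqe, hrwd]
      rw [he]
      nlinarith [hrw0 σ, dist_nonneg (x := q) (y := z)]
    · nlinarith [hrw0 σ]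
  -- closure fact
  have hKclO : K ⊆ closure O := by
    intro p hp
    rw [Metric.mem_closure_iff]
    intro η hη
    obtain ⟨σ, h1, _⟩ := hdense p hp η hη
    exact ⟨Sw σ z, hSwO σ ⟨z, hzO, rfl⟩, h1⟩
  have hSsim : ∀ i, IsSimilarity (S i) := fun i => ⟨r i, hr0 i, hrd i⟩
  have hSopen : ∀ i, IsOpen (S i '' O) := by
    intro i
    have he : S i '' O = hom [i] '' O := by
      apply Set.image_congr
      intro u _
      rw [hhom [i]]
      rfl
    rw [he]
    exact (hom [i]).isOpen_image.mpr hOopen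
  have htrap : ∀ σ : List (Fin N), K ∩ (Sw σ '' O) ⊆ Sw σ '' (K ∩ O) := by
    intro σ
    induction σ with
    | nil =>
      rw [hSwnil, Set.image_id, Set.image_id]
    | cons i σ ih =>
      rintro p ⟨hpK, hpO⟩
      rw [hSwcons, Set.image_comp] at hpO
      have hpiO : p ∈ S i '' O := Set.image_mono (f := S i) (hSwO σ) hpO
      have hp' : p ∈ ⋃ j, S j '' K := hattr ▸ hpK
      rw [Set.mem_iUnion] at hp'
      obtain ⟨j, q, hqK, hqe⟩ := hp'
      by_cases hij : j = i
      · subst hij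
        obtain ⟨q', hq', he⟩ := hpO
        have hqq : q' = q := (hSsim j).injective (by rw [he, hqe])
        have hiq : q ∈ Sw σ '' (K ∩ O) := ih ⟨hqK, hqq ▸ hq'⟩
        obtain ⟨b, hb, hbe⟩ := hiq
        refine ⟨b, hb, ?_⟩
        rw [hSwcons]
        show S j (Sw σ b) = p
        rw [hbe, hqe]
      · exfalso
        have hqcl : p ∈ closure (S j '' O) := by
          rw [← hqe]
          exact image_closure_subset_closure_image (hSsim j).continuous
            ⟨q, hKclO hqK, rfl⟩
        have hdisj : Disjoint (S i '' O) (closure (S j '' O)) :=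
          Disjoint.closure_right (hOdisj (fun h => hij h.symm)) (hSopen i)
        exact Set.disjoint_left.mp hdisj hpiO hqcl
  have hmove : ∀ (σ : List (Fin N)) (A : Set (EuclideanSpace ℝ (Fin d))), A ⊆ O →
      K ∩ Sw σ '' A = Sw σ '' (K ∩ A) := by
    intro σ A hA
    apply Set.Subset.antisymm
    · rintro p ⟨hpK, hpA⟩
      have h1 : p ∈ Sw σ '' (K ∩ O) := htrap σ ⟨hpK, Set.image_mono (f := _) hA hpA⟩
      obtain ⟨q, hq, rfl⟩ := h1
      obtain ⟨b, hb, hbe⟩ := hpA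
      have hbq : b = q := (hSwsim σ).injective hbe
      exact ⟨q, ⟨hq.1, hbq ▸ hb⟩, rfl⟩
    · rintro p ⟨q, ⟨hqK, hqA⟩, rfl⟩
      exact ⟨hSwK σ ⟨q, hqK, rfl⟩, ⟨q, hqA, rfl⟩⟩
  -- Stage 1 : find a cube inside a copy of O
  obtain ⟨ρC, hρC0, hρCsub⟩ := Metric.isOpen_iff.mp isOpen_interior w hwint
  obtain ⟨τ, hτ1, hτ2⟩ := hdense w hwK (ρC / 2) (by positivity)
  set zs := Sw τ z with hzs
  have hzsK : zs ∈ K := hSwK τ ⟨z, hzK, rfl⟩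
  have hrτρ : 0 < rw' τ * ρ := mul_pos (hrw0 τ) hρ0
  have hballsub : Metric.ball zs (rw' τ * ρ) ⊆ C := by
    intro b hb
    apply interior_subset
    apply hρCsub
    rw [Metric.mem_ball] at hb ⊢
    calc dist b w ≤ dist b zs + dist zs w := dist_triangle _ _ _
      _ < rw' τ * ρ + ρC / 2 := by
          have : dist zs w = dist w zs := dist_comm _ _
          rw [this]
          exact add_lt_add hb hτ1
      _ ≤ ρC / 2 + ρC / 2 := by linarith
      _ = ρC := by ring
  have hzsC : zs ∈ C := hballsub (Metric.mem_ball_self hrτρ)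
  have hballτ : Sw τ '' Metric.ball z ρ = Metric.ball zs (rw' τ * ρ) := by
    have he : Sw τ '' Metric.ball z ρ = hom τ '' Metric.ball z ρ :=
      Set.image_congr fun u _ => (hhom τ u).symm
    rw [he, homeo_image_ball (hom τ) (hrw0 τ) (fun u v => by rw [hhom τ u, hhom τ v, hrwd τ]) z ρ,
      hhom τ z]
  -- Stage 2 : a flat small cube near zs
  have ht0 : 0 < rw' τ * ρ / 2 := by positivity
  obtain ⟨D, hDcube, hDball, ⟨ξ, hξint, hξCK⟩, hDflat'⟩ :=
    stepA hkd hd0 hFsim hFimg ⟨hzsC, hzsK⟩ ht0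
  have hcbsub : Metric.closedBall zs (rw' τ * ρ / 2) ⊆ Metric.ball zs (rw' τ * ρ) :=
    Metric.closedBall_subset_ball (by linarith)
  have hDflat := hDflat' ((hcbsub.trans hballsub))
  have hDB : D ⊆ Metric.ball zs (rw' τ * ρ) := hDball.trans hcbsub
  -- Stage 3 : pull back into O
  set D0 : Set (EuclideanSpace ℝ (Fin d)) := ⇑(hom τ).symm '' D with hD0def
  have hτD0 : Sw τ '' D0 = D := by
    have he : Sw τ '' D0 = hom τ '' D0 := Set.image_congr fun u _ => (hhom τ u).symm
    rw [he, hD0def, ← Set.image_comp]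
    simp only [Function.comp, Homeomorph.apply_symm_apply]
    exact Set.image_id D
  have hD0ball : D0 ⊆ Metric.ball z ρ := by
    rintro _ ⟨b, hb, rfl⟩
    have hb' : b ∈ Sw τ '' Metric.ball z ρ := by rw [hballτ]; exact hDB hb
    obtain ⟨u, hu, hue⟩ := hb'
    have : (hom τ).symm b = u := by
      rw [← hue, ← hhom τ u, Homeomorph.symm_apply_apply]
    rwa [this]
  have hD0O : D0 ⊆ O := hD0ball.trans hρO
  have hKD : K ∩ D = Sw τ '' (K ∩ D0) := by rw [← hτD0]; exact hmove τ D0 hD0O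
  obtain ⟨g0, hg0sim, hg0img⟩ := hDcube
  have hD0cube : IsClosedCube D0 := ⟨⇑(hom τ).symm ∘ g0, (hhomsym τ).comp hg0sim, by
    rw [Set.image_comp, hg0img]⟩
  obtain ⟨P₁, F₁, hF₁sim, hF₁img⟩ := hDflat
  have hτD0K : Sw τ '' (D0 ∩ K) = D ∩ K := by
    rw [Set.inter_comm D0 K, ← hKD, Set.inter_comm]
  have hD0flat : SimilarSets (D0 ∩ K) (cubeProd k (d - k) P₁) :=
    ⟨F₁ ∘ Sw τ, hF₁sim.comp (hSwsim τ), by rw [Set.image_comp, hτD0K, hF₁img]⟩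
  set x0 := (hom τ).symm ξ with hx0
  have hx0int : x0 ∈ interior D0 := by
    rw [hD0def, ← Homeomorph.image_interior]
    exact ⟨ξ, hξint, rfl⟩
  have hx0K : x0 ∈ K := by
    have hξKD : ξ ∈ Sw τ '' (K ∩ D0) := by
      rw [← hKD]; exact ⟨hξCK.2, interior_subset hξint⟩
    obtain ⟨q, hq, hqe⟩ := hξKD
    have : x0 = q := by
      rw [hx0, ← hqe, ← hhom τ q, Homeomorph.symm_apply_apply]
    rw [this]; exact hq.1
  -- Stage 4 : push towards y
  obtain ⟨σ, hσ1, hσ2⟩ := hdense y hy (δ / 2) (by positivity)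
  refine ⟨Sw σ '' D0, ?_, ?_, ?_, ?_⟩
  · obtain ⟨g1, hg1sim, hg1img⟩ := hD0cube
    exact ⟨Sw σ ∘ g1, (hSwsim σ).comp hg1sim, by rw [Set.image_comp, hg1img]⟩
  · rintro _ ⟨b, hb, rfl⟩
    rw [Metric.mem_closedBall]
    have hbz : dist b z < ρ := hD0ball hb
    calc dist (Sw σ b) y ≤ dist (Sw σ b) (Sw σ z) + dist (Sw σ z) y := dist_triangle _ _ _
      _ = rw' σ * dist b z + dist y (Sw σ z) := by rw [hrwd σ, dist_comm (Sw σ z) y]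
      _ ≤ rw' σ * ρ + dist y (Sw σ z) := by
          have := (hrw0 σ).le
          nlinarith
      _ ≤ δ / 2 + δ / 2 := add_le_add hσ2.le hσ1.le
      _ = δ := by ring
  · refine ⟨Sw σ x0, ?_, hSwK σ ⟨x0, hx0K, rfl⟩⟩
    have he : Sw σ '' D0 = hom σ '' D0 := Set.image_congr fun u _ => (hhom σ u).symm
    rw [he, ← Homeomorph.image_interior]
    exact ⟨x0, hx0int, hhom σ x0⟩
  · have hKC' : Sw σ '' D0 ∩ K = Sw σ '' (D0 ∩ K) := by
      rw [Set.inter_comm, hmove σ D0 hD0O, Set.inter_comm K D0]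
    obtain ⟨F₂, hF₂sim, hF₂img⟩ := hD0flat
    refine ⟨P₁, F₂ ∘ ⇑(hom σ).symm, hF₂sim.comp (hhomsym σ), ?_⟩
    have he : Sw σ '' (D0 ∩ K) = ⇑(hom σ) '' (D0 ∩ K) :=
      Set.image_congr fun u _ => (hhom σ u).symm
    have hsi : ⇑(hom σ).symm '' (⇑(hom σ) '' (D0 ∩ K)) = D0 ∩ K := by
      rw [← Set.image_comp]
      have h2 : (⇑(hom σ).symm ∘ ⇑(hom σ)) '' (D0 ∩ K) = id '' (D0 ∩ K) :=
        Set.image_congr fun u _ => (hom σ).symm_apply_apply u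
      rw [h2, Set.image_id]
    rw [Set.image_comp, hKC', he, hsi, hF₂img]
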